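/- (Greedy progress implies logarithmic cost bound — abstract form) Let Q > 0, η > 0, β ≥ 1, OPT > 0. Suppose a sequence of values v_0 = 0 ≤ v_1 ≤ … ≤ v_T ≤ Q and positive costs c_1, …, c_T satisfy: for each t < T with v_t < Q, v_{t+1} − v_t ≥ c_{t+1}·(Q − v_t)/(β·OPT); each c_t ≤ β·OPT; v_T ≥ Q but v_{T−1} < Q; and whenever v_t ≥ Q − η it holds that v_t ≥ Q. Then Σ_{t=1}^{T} c_t ≤ β·(ln(Q/η) + 1)·OPT. -/

import Mathlib

/-- Greedy progress implies logarithmic cost bound (abstract form). -/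
theorem greedy_log_cost_bound
    (Q η β OPT : ℝ) (hQ : 0 < Q) (hη : 0 < η) (hβ : 1 ≤ β) (hOPT : 0 < OPT)
    (T : ℕ) (hT : 1 ≤ T)
    (v : ℕ → ℝ) (c : ℕ → ℝ)
    (hv0 : v 0 = 0)
    (hmono : ∀ t, t < T → v t ≤ v (t + 1))
    (hvQ : v T ≤ Q)
    (hcpos : ∀ t ∈ Finset.Icc 1 T, 0 < c t)
    (hprog : ∀ t, t < T → v t < Q →
      c (t + 1) * (Q - v t) / (β * OPT) ≤ v (t + 1) - v t)
    (hcle : ∀ t ∈ Finset.Icc 1 T, c t ≤ β * OPT)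
    (hend : Q ≤ v T) (hbefore : v (T - 1) < Q)
    (hgap : ∀ t, t ≤ T → Q - η ≤ v t → Q ≤ v t) :
    ∑ t ∈ Finset.Icc 1 T, c t ≤ β * (Real.log (Q / η) + 1) * OPT := by
  set B := β * OPT with hBdef
  have hB : 0 < B := mul_pos (lt_of_lt_of_le one_pos hβ) hOPT
  obtain ⟨n, rfl⟩ : ∃ n, T = n + 1 := ⟨T - 1, by omega⟩
  have hbefore' : v n < Q := by simpa using hbefore
  -- monotone up to n
  have hmono' : ∀ s t : ℕ, s ≤ t → t ≤ n + 1 → v s ≤ v t := by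
    intro s t hst htn
    induction t with
    | zero => simpa [Nat.le_zero.mp hst]
    | succ k ih =>
      rcases Nat.eq_or_lt_of_le hst with rfl | h
      · exact le_refl _
      · exact le_trans (ih (by omega) (by omega)) (hmono k (by omega))
  have hlt : ∀ t, t ≤ n → v t < Q := fun t ht =>
    lt_of_le_of_lt (hmono' t n ht (by omega)) hbefore'
  -- per-step bound
  have hstep : ∀ t, t < n →
      c (t + 1) ≤ B * (Real.log (Q - v t) - Real.log (Q - v (t + 1))) := by
    intro t ht
    have ha : 0 < Q - v t := by have := hlt t (by omega); linarith
    have hb : 0 < Q - v (t + 1) := by have := hlt (t + 1) (by omega); linarith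
    have hp := hprog t (by omega) (by linarith)
    have h1 : c (t + 1) ≤ B * ((v (t + 1) - v t) / (Q - v t)) := by
      rw [div_le_iff₀ hB] at hp
      rw [mul_div_assoc', le_div_iff₀ ha]
      linarith
    have hlog : 1 - (Q - v (t + 1)) / (Q - v t)
        ≤ Real.log (Q - v t) - Real.log (Q - v (t + 1)) := by
      have h2 := Real.log_le_sub_one_of_pos (div_pos hb ha)
      rw [Real.log_div (ne_of_gt hb) (ne_of_gt ha)] at h2
      linarith
    have heq : (v (t + 1) - v t) / (Q - v t) = 1 - (Q - v (t + 1)) / (Q - v t) := by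
      field_simp
      ring
    rw [heq] at h1
    exact le_trans h1 (mul_le_mul_of_nonneg_left hlog hB.le)
  -- telescoping sum
  have hsum : ∑ i ∈ Finset.range n, c (i + 1)
      ≤ B * (Real.log (Q - v 0) - Real.log (Q - v n)) := by
    calc ∑ i ∈ Finset.range n, c (i + 1)
        ≤ ∑ i ∈ Finset.range n,
            B * (Real.log (Q - v i) - Real.log (Q - v (i + 1))) :=
          Finset.sum_le_sum fun i hi => hstep i (Finset.mem_range.mp hi)
      _ = B * ∑ i ∈ Finset.range n,
            (Real.log (Q - v i) - Real.log (Q - v (i + 1))) :=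
          (Finset.mul_sum _ _ _).symm
      _ = B * (Real.log (Q - v 0) - Real.log (Q - v n)) := by
          rw [Finset.sum_range_sub' (fun i => Real.log (Q - v i))]
  -- gap bound: η ≤ Q - v n
  have hgapn : η ≤ Q - v n := by
    by_contra h
    push_neg at h
    have := hgap n (by omega) (by linarith)
    linarith
  have hlogb : Real.log (Q - v 0) - Real.log (Q - v n) ≤ Real.log (Q / η) := by
    rw [hv0, sub_zero, Real.log_div (ne_of_gt hQ) (ne_of_gt hη)]
    have : Real.log η ≤ Real.log (Q - v n) := Real.log_le_log hη hgapn
    linarith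
  have hsum' : ∑ i ∈ Finset.range n, c (i + 1) ≤ B * Real.log (Q / η) :=
    le_trans hsum (mul_le_mul_of_nonneg_left hlogb hB.le)
  have hcT : c (n + 1) ≤ B := hcle (n + 1) (Finset.mem_Icc.mpr ⟨by omega, le_refl _⟩)
  have hsplit : ∑ t ∈ Finset.Icc 1 (n + 1), c t
      = (∑ i ∈ Finset.range n, c (i + 1)) + c (n + 1) := by
    rw [Finset.sum_Icc_succ_top (by omega : 1 ≤ n + 1)]
    congr 1
    rw [← Finset.Ico_add_one_right_eq_Icc, Finset.sum_Ico_eq_sum_range]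
    simp [add_comm]
  rw [hsplit]
  have : β * (Real.log (Q / η) + 1) * OPT = B * Real.log (Q / η) + B := by
    rw [hBdef]; ring
  rw [this]
  linarith
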